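/- Let H be a real Hilbert space and let T be a nonzero compact linear operator on H such that M_T = S_{H₀} for some closed subspace H₀ of H. Then H₀ is finite dimensional and sup{‖Tz‖ : z ∈ H₀^⊥, ‖z‖ = 1} < ‖T‖. -/

import Mathlib

open scoped RealInnerProductSpace
open Filter Topology Metric Set

/-- If `T` is a nonzero compact linear operator on a real Hilbert space whose norm
attainment set is the unit sphere of a closed subspace `H₀`, then `H₀` is finite
dimensional and the norm of `T` restricted to `H₀ᗮ` is strictly smaller than
`‖T‖`. -/
theorem compact_norm_attainment_finiteDimensional
    {H : Type*} [NormedAddCommGroup H] [InnerProductSpace ℝ H] [CompleteSpace H]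
    (T : H →L[ℝ] H) (hT : IsCompactOperator T) (hT0 : T ≠ 0)
    (H₀ : Submodule ℝ H) (hclosed : IsClosed (H₀ : Set H))
    (hMT : {x : H | ‖x‖ = 1 ∧ ‖T x‖ = ‖T‖} = {x : H | x ∈ H₀ ∧ ‖x‖ = 1}) :
    FiniteDimensional ℝ H₀ ∧
      sSup {r : ℝ | ∃ z ∈ H₀ᗮ, ‖z‖ = 1 ∧ r = ‖T z‖} < ‖T‖ := by
  have hTpos : (0:ℝ) < ‖T‖ := norm_pos_iff.mpr hT0
  -- T attains its norm on all of H₀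
  have hnorm : ∀ x ∈ H₀, ‖T x‖ = ‖T‖ * ‖x‖ := by
    intro x hx
    rcases eq_or_ne x 0 with rfl | hx0
    · simp
    · have hxn : (0:ℝ) < ‖x‖ := norm_pos_iff.mpr hx0
      set u : H := ‖x‖⁻¹ • x with hu
      have hu1 : ‖u‖ = 1 := by
        rw [hu, norm_smul, norm_inv, norm_norm, inv_mul_cancel₀ hxn.ne']
      have humem : u ∈ H₀ := H₀.smul_mem _ hx
      have : u ∈ {x : H | ‖x‖ = 1 ∧ ‖T x‖ = ‖T‖} := by
        rw [hMT]; exact ⟨humem, hu1⟩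
      have hTu : ‖T u‖ = ‖T‖ := this.2
      have : ‖T u‖ = ‖x‖⁻¹ * ‖T x‖ := by
        rw [hu, map_smul, norm_smul, norm_inv, norm_norm]
      rw [this] at hTu
      field_simp at hTu
      linarith [hTu]
  -- Part 1: finite dimensionality
  haveI : CompleteSpace H₀ := hclosed.completeSpace_coe
  have hfd : FiniteDimensional ℝ H₀ := by
    set φ : H₀ → H := fun x => ‖T‖⁻¹ • T x with hφ
    have hiso : Isometry φ := by
      apply Isometry.of_dist_eq
      intro a b
      have hab : ((a:H) - b) ∈ H₀ := H₀.sub_mem a.2 b.2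
      simp only [hφ, dist_eq_norm, ← smul_sub, ← map_sub, norm_smul, norm_inv, norm_norm]
      rw [hnorm _ hab, inv_mul_cancel_left₀ hTpos.ne']
      rfl
    have hK : IsCompact (closure (T '' closedBall (0:H) 1)) :=
      IsCompactOperator.isCompact_closure_image_closedBall (f := (T : H →ₗ[ℝ] H)) hT 1
    have htb : TotallyBounded (φ '' closedBall (0:H₀) 1) := by
      have h1 : TotallyBounded (T '' closedBall (0:H) 1) :=
        hK.totallyBounded.subset subset_closure
      have h2 : TotallyBounded ((fun y : H => ‖T‖⁻¹ • y) '' (T '' closedBall (0:H) 1)) :=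
        h1.image ((‖T‖⁻¹ • ContinuousLinearMap.id ℝ H).uniformContinuous)
      apply h2.subset
      rintro _ ⟨x, hx, rfl⟩
      exact ⟨T x, ⟨x, by simpa [Submodule.coe_norm] using mem_closedBall_zero_iff.mp hx, rfl⟩, rfl⟩
    have htb' : TotallyBounded (closedBall (0:H₀) 1) :=
      (totallyBounded_image_iff hiso.isUniformInducing).mp htb
    have hcomp : IsCompact (closedBall (0:H₀) 1) :=
      TotallyBounded.isCompact_of_isClosed htb' isClosed_closedBall
    exact FiniteDimensional.of_isCompact_closedBall₀ ℝ one_pos hcomp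
  refine ⟨hfd, ?_⟩
  -- Part 2
  set R := {r : ℝ | ∃ z ∈ H₀ᗮ, ‖z‖ = 1 ∧ r = ‖T z‖} with hR
  have hbdd : ∀ r ∈ R, r ≤ ‖T‖ := by
    rintro r ⟨z, hz, hz1, rfl⟩
    calc ‖T z‖ ≤ ‖T‖ * ‖z‖ := T.le_opNorm z
    _ = ‖T‖ := by rw [hz1, mul_one]
  rcases R.eq_empty_or_nonempty with hRe | hRne
  · rw [hRe]; simpa [Real.sSup_empty] using hTpos
  by_contra hcon
  push_neg at hcon
  have hsup : sSup R = ‖T‖ :=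
    le_antisymm (csSup_le hRne hbdd) hcon
  -- choose maximizing sequence
  have hseq : ∀ n : ℕ, ∃ z, z ∈ H₀ᗮ ∧ ‖z‖ = 1 ∧ ‖T‖ - 1/(n+1) < ‖T z‖ := by
    intro n
    have hlt : ‖T‖ - 1/(n+1) < sSup R := by
      rw [hsup]; have : (0:ℝ) < 1/(n+1) := by positivity
      linarith
    obtain ⟨r, hrR, hr⟩ := exists_lt_of_lt_csSup hRne hlt
    obtain ⟨z, hz, hz1, rfl⟩ := hrR
    exact ⟨z, hz, hz1, hr⟩
  choose z hzmem hz1 hzlt using hseq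
  have hTz : Tendsto (fun n => ‖T (z n)‖) atTop (𝓝 ‖T‖) := by
    have h1 : Tendsto (fun n : ℕ => ‖T‖ - 1/(n+1)) atTop (𝓝 ‖T‖) := by
      have := tendsto_one_div_add_atTop_nhds_zero_nat (𝕜 := ℝ)
      simpa using (tendsto_const_nhds (x := ‖T‖)).sub this
    refine tendsto_of_tendsto_of_tendsto_of_le_of_le h1 tendsto_const_nhds
      (fun n => (hzlt n).le) (fun n => ?_)
    calc ‖T (z n)‖ ≤ ‖T‖ * ‖z n‖ := T.le_opNorm _
    _ = ‖T‖ := by rw [hz1, mul_one]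
  -- the operator A = T† ∘ T
  set A : H →L[ℝ] H := ContinuousLinearMap.adjoint T ∘L T with hA
  have hAcomp : IsCompactOperator A :=
    hT.continuous_comp (ContinuousLinearMap.adjoint T).continuous
  set c : ℝ := ‖T‖ ^ 2 with hc
  have hcpos : (0:ℝ) < c := by positivity
  have hkey : ∀ n, ‖A (z n) - c • z n‖ ^ 2 ≤ 2 * c^2 - 2 * c * ‖T (z n)‖^2 := by
    intro n
    have hinner : ⟪A (z n), c • z n⟫ = c * ‖T (z n)‖^2 := by
      rw [real_inner_smul_right]
      have : ⟪A (z n), z n⟫ = ⟪T (z n), T (z n)⟫ := by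
        rw [hA]
        exact ContinuousLinearMap.adjoint_inner_left T (z n) (T (z n))
      rw [this, real_inner_self_eq_norm_sq]
    have hAn : ‖A (z n)‖ ≤ c := by
      calc ‖A (z n)‖ ≤ ‖ContinuousLinearMap.adjoint T‖ * ‖T (z n)‖ :=
        (ContinuousLinearMap.adjoint T).le_opNorm _
      _ ≤ ‖T‖ * (‖T‖ * ‖z n‖) := by
          rw [(ContinuousLinearMap.adjoint : (H →L[ℝ] H) ≃ₗᵢ⋆[ℝ] (H →L[ℝ] H)).norm_map T]
          exact mul_le_mul_of_nonneg_left (T.le_opNorm _) (norm_nonneg _)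
      _ = c := by rw [hz1, mul_one, hc, sq]
    have hcz : ‖c • z n‖ ^ 2 = c^2 := by
      rw [norm_smul, Real.norm_eq_abs, abs_of_pos hcpos, hz1, mul_one]
    rw [norm_sub_sq_real, hinner, hcz]
    nlinarith [norm_nonneg (A (z n)), sq_nonneg (‖A (z n)‖)]
  have hto0 : Tendsto (fun n => A (z n) - c • z n) atTop (𝓝 0) := by
    rw [tendsto_zero_iff_norm_tendsto_zero]
    have hsq : Tendsto (fun n => ‖A (z n) - c • z n‖^2) atTop (𝓝 0) := by
      have hb : Tendsto (fun n => 2 * c^2 - 2 * c * ‖T (z n)‖^2) atTop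
          (𝓝 (2 * c^2 - 2 * c * ‖T‖^2)) :=
        tendsto_const_nhds.sub ((hTz.pow 2).const_mul (2*c))
      have h0 : 2 * c^2 - 2 * c * ‖T‖^2 = 0 := by rw [hc]; ring
      rw [h0] at hb
      exact squeeze_zero (fun n => sq_nonneg _) hkey hb
    have := hsq.sqrt
    simpa [Real.sqrt_sq (norm_nonneg _)] using this
  -- find convergent subsequence of A (z n)
  have hKA : IsCompact (closure ((A : H →ₗ[ℝ] H) '' closedBall (0:H) 1)) :=
    IsCompactOperator.isCompact_closure_image_closedBall (f := (A : H →ₗ[ℝ] H)) hAcomp 1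
  have hmemK : ∀ n, A (z n) ∈ closure ((A : H →ₗ[ℝ] H) '' closedBall (0:H) 1) := by
    intro n
    exact subset_closure ⟨z n, by simp [mem_closedBall_zero_iff, hz1], rfl⟩
  obtain ⟨y, -, ψ, hψ, hconv⟩ := hKA.tendsto_subseq hmemK
  -- z ∘ ψ converges to w := c⁻¹ • y
  have hczconv : Tendsto (fun n => c • z (ψ n)) atTop (𝓝 y) := by
    have h1 : Tendsto (fun n => A (z (ψ n)) - c • z (ψ n)) atTop (𝓝 0) :=
      hto0.comp hψ.tendsto_atTop
    have := hconv.sub h1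
    simpa using this
  set w : H := c⁻¹ • y with hw
  have hzconv : Tendsto (fun n => z (ψ n)) atTop (𝓝 w) := by
    have := hczconv.const_smul c⁻¹
    simpa [hw, inv_smul_smul₀ hcpos.ne'] using this
  have hw1 : ‖w‖ = 1 := by
    have := (hzconv.norm)
    have h2 : Tendsto (fun n => ‖z (ψ n)‖) atTop (𝓝 1) := by
      simpa [hz1] using tendsto_const_nhds (x := (1:ℝ))
    exact tendsto_nhds_unique this h2
  have hwmem : w ∈ H₀ᗮ := by
    have : IsClosed (H₀ᗮ : Set H) := H₀.isClosed_orthogonal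
    exact this.mem_of_tendsto hzconv (Eventually.of_forall fun n => hzmem _)
  have hTw : ‖T w‖ = ‖T‖ := by
    have h1 : Tendsto (fun n => ‖T (z (ψ n))‖) atTop (𝓝 ‖T w‖) :=
      ((T.continuous.tendsto w).comp hzconv).norm
    have h2 : Tendsto (fun n => ‖T (z (ψ n))‖) atTop (𝓝 ‖T‖) :=
      hTz.comp hψ.tendsto_atTop
    exact tendsto_nhds_unique h1 h2
  have hwH0 : w ∈ H₀ := by
    have : w ∈ {x : H | ‖x‖ = 1 ∧ ‖T x‖ = ‖T‖} := ⟨hw1, hTw⟩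
    rw [hMT] at this
    exact this.1
  have : w = 0 := by
    have h0 : ⟪w, w⟫ = 0 := (Submodule.mem_orthogonal H₀ w).mp hwmem w hwH0
    exact inner_self_eq_zero.mp h0
  rw [this] at hw1
  simp at hw1
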